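/- arXiv:2007.00547 — 3 statements merged into one kernel-verified Lean document; each statement's English description precedes it below -/
import Mathlib

section
/- For each harmonic homogeneous polynomial P of bidegree (p,q) on ℂ² with p ≥ 1, the function Z_1 P (restricted to S³) is the restriction of a harmonic homogeneous polynomial of bidegree (p−1, q+1); and if p = 0 then Z_1 P = 0 on S³. In other words, the operator Z_1 maps H_{p,q} into H_{p−1,q+1} for p ≥ 1 and annihilates H_{0,q}. -/
open MvPolynomial

/-- The CR vector field `Z₁ = w̄ ∂/∂z − z̄ ∂/∂w` acting formally on polynomials in
`z, w, z̄, w̄` (variables `0, 1, 2, 3`). -/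
noncomputable def Z1 (P : MvPolynomial (Fin 4) ℂ) : MvPolynomial (Fin 4) ℂ :=
  X 3 * pderiv 0 P - X 2 * pderiv 1 P

/-- Membership in the unit sphere `S³ ⊂ ℂ²`. -/
def OnSphere (v : ℂ × ℂ) : Prop :=
  Complex.normSq v.1 + Complex.normSq v.2 = 1

/-- Evaluation of a polynomial in `z, w, z̄, w̄` at a point of `ℂ²`. -/
noncomputable def evalS (P : MvPolynomial (Fin 4) ℂ) (v : ℂ × ℂ) : ℂ :=
  eval ![v.1, v.2, starRingEnd ℂ v.1, starRingEnd ℂ v.2] P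

/-- `P` is homogeneous of bidegree `(p,q)`: degree `p` in `(z,w)`, degree `q` in `(z̄,w̄)`. -/
def IsBihomogeneous (p q : ℕ) (P : MvPolynomial (Fin 4) ℂ) : Prop :=
  ∀ m ∈ P.support, m 0 + m 1 = p ∧ m 2 + m 3 = q

/-- (One quarter of) the Laplacian of `ℝ⁴ ≅ ℂ²`: `∂z∂z̄ + ∂w∂w̄`. -/
noncomputable def lap (P : MvPolynomial (Fin 4) ℂ) : MvPolynomial (Fin 4) ℂ :=
  pderiv 2 (pderiv 0 P) + pderiv 3 (pderiv 1 P)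

/-- `P` is a harmonic homogeneous polynomial of bidegree `(p,q)`, so that its restriction
to `S³` is an element of the spherical harmonic space `H_{p,q}`. -/
def IsHpq (p q : ℕ) (P : MvPolynomial (Fin 4) ℂ) : Prop :=
  IsBihomogeneous p q P ∧ lap P = 0


open Finsupp in
lemma coeff_pderiv' (i : Fin 4) (m : Fin 4 →₀ ℕ) (P : MvPolynomial (Fin 4) ℂ) :
    coeff m (pderiv i P) = ((m i + 1 : ℕ) : ℂ) * coeff (m + Finsupp.single i 1) P := by
  induction P using MvPolynomial.induction_on' with
  | add f g hf hg => simp [hf, hg, mul_add]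
  | monomial u a =>
    rw [pderiv_monomial, coeff_monomial, coeff_monomial]
    by_cases h : u = m + Finsupp.single i 1
    · subst h
      rw [if_pos (add_tsub_cancel_right _ _), if_pos rfl]
      simp [mul_comm]
    · rw [if_neg h]
      split_ifs with h2
      · rcases Nat.eq_zero_or_pos (u i) with h3 | h3
        · simp [h3]
        · exfalso
          apply h
          rw [← h2, tsub_add_cancel_of_le (Finsupp.single_le_iff.mpr h3)]
      · ring

lemma pderiv_comm' (i j : Fin 4) (P : MvPolynomial (Fin 4) ℂ) :
    pderiv i (pderiv j P) = pderiv j (pderiv i P) := by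
  by_cases h : i = j
  · subst h; rfl
  · ext m
    simp only [coeff_pderiv', Finsupp.add_apply, Finsupp.single_apply, if_neg h,
      if_neg (Ne.symm h), add_zero]
    rw [add_right_comm]
    ring

lemma lap_Z1 (P : MvPolynomial (Fin 4) ℂ) : lap (Z1 P) = Z1 (lap P) := by
  have h02 : (0 : Fin 4) ≠ 2 := by decide
  have h03 : (0 : Fin 4) ≠ 3 := by decide
  have h12 : (1 : Fin 4) ≠ 2 := by decide
  have h13 : (1 : Fin 4) ≠ 3 := by decide
  have h23 : (2 : Fin 4) ≠ 3 := by decide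
  simp only [lap, Z1, map_sub, map_add, pderiv_mul, pderiv_X_self,
    pderiv_X_of_ne h03, pderiv_X_of_ne h02, pderiv_X_of_ne h13, pderiv_X_of_ne h12,
    pderiv_X_of_ne h03.symm, pderiv_X_of_ne h02.symm, pderiv_X_of_ne h13.symm,
    pderiv_X_of_ne h12.symm,
    pderiv_X_of_ne h23, pderiv_X_of_ne h23.symm, zero_mul, one_mul, zero_add, add_zero, mul_zero,
    map_zero]
  simp only [pderiv_comm' 0 1, pderiv_comm' 0 2, pderiv_comm' 0 3, pderiv_comm' 1 2,
    pderiv_comm' 1 3, pderiv_comm' 2 3]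
  ring

/-- `Z₁` maps `H_{p,q}` into `H_{p−1,q+1}` for `p ≥ 1`: if `P` is a
harmonic homogeneous polynomial of bidegree `(p,q)` with `p ≥ 1`, then `Z₁ P` is a
harmonic homogeneous polynomial of bidegree `(p−1, q+1)`; and if `p = 0` then
`Z₁ P = 0` on `S³`. -/
theorem stmt1 (p q : ℕ) (P : MvPolynomial (Fin 4) ℂ) (hP : IsHpq p q P) :
    (1 ≤ p → IsHpq (p - 1) (q + 1) (Z1 P)) ∧
    (p = 0 → ∀ v : ℂ × ℂ, OnSphere v → evalS (Z1 P) v = 0) := by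
  constructor
  · intro hp
    constructor
    · intro m hm
      have hm' := MvPolynomial.support_sub _ _ _ hm
      rw [Finset.mem_union] at hm'
      rcases hm' with h | h
      · rw [support_X_mul, Finset.mem_map] at h
        obtain ⟨n, hn, rfl⟩ := h
        rw [mem_support_iff, coeff_pderiv'] at hn
        have hnP : n + Finsupp.single 0 1 ∈ P.support := by
          rw [mem_support_iff]; intro h0; rw [h0, mul_zero] at hn; exact hn rfl
        obtain ⟨h1, h2⟩ := hP.1 _ hnP
        simp (config := { decide := true }) only [Finsupp.add_apply, Finsupp.single_apply,
          addLeftEmbedding_apply, if_true, if_false] at h1 h2 ⊢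
        omega
      · rw [support_X_mul, Finset.mem_map] at h
        obtain ⟨n, hn, rfl⟩ := h
        rw [mem_support_iff, coeff_pderiv'] at hn
        have hnP : n + Finsupp.single 1 1 ∈ P.support := by
          rw [mem_support_iff]; intro h0; rw [h0, mul_zero] at hn; exact hn rfl
        obtain ⟨h1, h2⟩ := hP.1 _ hnP
        simp (config := { decide := true }) only [Finsupp.add_apply, Finsupp.single_apply,
          addLeftEmbedding_apply, if_true, if_false] at h1 h2 ⊢
        omega
    · rw [lap_Z1, hP.2]
      simp [Z1]
  · intro hp0 v _
    have key : ∀ i : Fin 4, i = 0 ∨ i = 1 → pderiv i P = 0 := by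
      intro i hi
      ext n
      rw [coeff_pderiv']
      have hns : n + Finsupp.single i 1 ∉ P.support := by
        intro h
        have h1 := (hP.1 _ h).1
        rcases hi with rfl | rfl <;>
          simp [hp0, Finsupp.add_apply, Finsupp.single_apply] at h1
      rw [notMem_support_iff.mp hns]
      simp
    have h0 := key 0 (Or.inl rfl)
    have h1 := key 1 (Or.inr rfl)
    simp [Z1, h0, h1, evalS]
end

section
/- For p ≥ 1 and q ≥ 0, the linear map Z_1 : H_{p,q} → H_{p−1,q+1} is an isomorphism of finite-dimensional complex vector spaces. -/
open MvPolynomial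

noncomputable def S1 (P : MvPolynomial (Fin 4) ℂ) : MvPolynomial (Fin 4) ℂ :=
  X 1 * pderiv 2 P - X 0 * pderiv 3 P

noncomputable def Eh (P : MvPolynomial (Fin 4) ℂ) : MvPolynomial (Fin 4) ℂ :=
  X 0 * pderiv 0 P + X 1 * pderiv 1 P

noncomputable def Ea (P : MvPolynomial (Fin 4) ℂ) : MvPolynomial (Fin 4) ℂ :=
  X 2 * pderiv 2 P + X 3 * pderiv 3 P

noncomputable def R2 : MvPolynomial (Fin 4) ℂ := X 0 * X 2 + X 1 * X 3

lemma pderiv_pderiv_comm {σ R : Type*} [CommSemiring R] [DecidableEq σ] (i j : σ)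
    (P : MvPolynomial σ R) : pderiv i (pderiv j P) = pderiv j (pderiv i P) := by
  induction P using MvPolynomial.induction_on' with
  | monomial m c =>
      simp only [pderiv_monomial]
      rcases eq_or_ne i j with rfl | hij
      · rfl
      · have h1 : (m - Finsupp.single j 1 : σ →₀ ℕ) i = m i := by
          rw [Finsupp.tsub_apply]; simp [Finsupp.single_apply, hij.symm]
        have h2 : (m - Finsupp.single i 1 : σ →₀ ℕ) j = m j := by
          rw [Finsupp.tsub_apply]; simp [Finsupp.single_apply, hij]
        rw [h1, h2, tsub_tsub, tsub_tsub, add_comm]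
        ring_nf
  | add p q hp hq => simp [map_add, hp, hq]

lemma opA (Q : MvPolynomial (Fin 4) ℂ) :
    Z1 (S1 Q) = R2 * lap Q - Eh (Ea Q) - Ea Q := by
  simp only [Z1, S1, Eh, Ea, lap, R2, map_sub, map_add, map_zero, pderiv_mul, pderiv_one, pderiv_X_self,
    pderiv_X_of_ne (show (1:Fin 4) ≠ 0 by decide), pderiv_X_of_ne (show (0:Fin 4) ≠ 1 by decide),
    pderiv_X_of_ne (show (2:Fin 4) ≠ 0 by decide), pderiv_X_of_ne (show (3:Fin 4) ≠ 0 by decide),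
    pderiv_X_of_ne (show (2:Fin 4) ≠ 1 by decide), pderiv_X_of_ne (show (3:Fin 4) ≠ 1 by decide),
    pderiv_X_of_ne (show (0:Fin 4) ≠ 2 by decide), pderiv_X_of_ne (show (1:Fin 4) ≠ 2 by decide),
    pderiv_X_of_ne (show (0:Fin 4) ≠ 3 by decide), pderiv_X_of_ne (show (1:Fin 4) ≠ 3 by decide),
    pderiv_X_of_ne (show (3:Fin 4) ≠ 2 by decide), pderiv_X_of_ne (show (2:Fin 4) ≠ 3 by decide)]
  rw [pderiv_pderiv_comm 0 2 Q, pderiv_pderiv_comm 1 2 Q, pderiv_pderiv_comm 0 3 Q,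
    pderiv_pderiv_comm 1 3 Q]
  ring

lemma opB (Q : MvPolynomial (Fin 4) ℂ) :
    S1 (Z1 Q) = R2 * lap Q - Eh (Ea Q) - Eh Q := by
  simp only [Z1, S1, Eh, Ea, lap, R2, map_sub, map_add, map_zero, pderiv_mul, pderiv_one, pderiv_X_self,
    pderiv_X_of_ne (show (1:Fin 4) ≠ 0 by decide), pderiv_X_of_ne (show (0:Fin 4) ≠ 1 by decide),
    pderiv_X_of_ne (show (2:Fin 4) ≠ 0 by decide), pderiv_X_of_ne (show (3:Fin 4) ≠ 0 by decide),
    pderiv_X_of_ne (show (2:Fin 4) ≠ 1 by decide), pderiv_X_of_ne (show (3:Fin 4) ≠ 1 by decide),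
    pderiv_X_of_ne (show (0:Fin 4) ≠ 2 by decide), pderiv_X_of_ne (show (1:Fin 4) ≠ 2 by decide),
    pderiv_X_of_ne (show (0:Fin 4) ≠ 3 by decide), pderiv_X_of_ne (show (1:Fin 4) ≠ 3 by decide),
    pderiv_X_of_ne (show (3:Fin 4) ≠ 2 by decide), pderiv_X_of_ne (show (2:Fin 4) ≠ 3 by decide)]
  rw [pderiv_pderiv_comm 2 0 Q, pderiv_pderiv_comm 3 0 Q, pderiv_pderiv_comm 2 1 Q,
    pderiv_pderiv_comm 3 1 Q]
  ring

lemma opC (Q : MvPolynomial (Fin 4) ℂ) : lap (S1 Q) = S1 (lap Q) := by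
  simp only [S1, lap, map_sub, map_add, map_zero, pderiv_mul, pderiv_one, pderiv_X_self,
    pderiv_X_of_ne (show (1:Fin 4) ≠ 0 by decide), pderiv_X_of_ne (show (0:Fin 4) ≠ 1 by decide),
    pderiv_X_of_ne (show (2:Fin 4) ≠ 0 by decide), pderiv_X_of_ne (show (3:Fin 4) ≠ 0 by decide),
    pderiv_X_of_ne (show (2:Fin 4) ≠ 1 by decide), pderiv_X_of_ne (show (3:Fin 4) ≠ 1 by decide),
    pderiv_X_of_ne (show (0:Fin 4) ≠ 2 by decide), pderiv_X_of_ne (show (1:Fin 4) ≠ 2 by decide),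
    pderiv_X_of_ne (show (0:Fin 4) ≠ 3 by decide), pderiv_X_of_ne (show (1:Fin 4) ≠ 3 by decide),
    pderiv_X_of_ne (show (3:Fin 4) ≠ 2 by decide), pderiv_X_of_ne (show (2:Fin 4) ≠ 3 by decide)]
  rw [pderiv_pderiv_comm 0 2 Q, pderiv_pderiv_comm 1 3 Q, pderiv_pderiv_comm 3 2 Q,
    pderiv_pderiv_comm 1 2 Q, pderiv_pderiv_comm 0 3 Q,
    pderiv_pderiv_comm 3 2 ((pderiv 1) Q), pderiv_pderiv_comm 2 3 ((pderiv 0) Q)]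
  ring


lemma X_mul_pderiv_monomial (i : Fin 4) (m : Fin 4 →₀ ℕ) (c : ℂ) :
    X i * pderiv i (monomial m c) = ((m i : ℕ) : ℂ) • monomial m c := by
  rw [pderiv_monomial]
  rcases Nat.eq_zero_or_pos (m i) with h | h
  · simp [h]
  · have hX : (X i : MvPolynomial (Fin 4) ℂ) = monomial (Finsupp.single i 1) 1 := rfl
    rw [hX, monomial_mul, smul_monomial, one_mul,
      add_tsub_cancel_of_le (Finsupp.single_le_iff.mpr h), mul_comm, smul_eq_mul]

lemma Eh_monomial (m : Fin 4 →₀ ℕ) (c : ℂ) :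
    Eh (monomial m c) = ((m 0 + m 1 : ℕ) : ℂ) • monomial m c := by
  rw [Eh, X_mul_pderiv_monomial, X_mul_pderiv_monomial, Nat.cast_add, add_smul]

lemma Ea_monomial (m : Fin 4 →₀ ℕ) (c : ℂ) :
    Ea (monomial m c) = ((m 2 + m 3 : ℕ) : ℂ) • monomial m c := by
  rw [Ea, X_mul_pderiv_monomial, X_mul_pderiv_monomial, Nat.cast_add, add_smul]

lemma Eh_bihom {a b : ℕ} {P : MvPolynomial (Fin 4) ℂ} (h : IsBihomogeneous a b P) :
    Eh P = (a : ℂ) • P := by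
  conv_lhs => rw [P.as_sum]
  conv_rhs => rw [P.as_sum]
  rw [Eh, map_sum, map_sum, Finset.mul_sum, Finset.mul_sum, ← Finset.sum_add_distrib,
    Finset.smul_sum]
  refine Finset.sum_congr rfl fun m hm => ?_
  have := Eh_monomial m (coeff m P)
  rw [Eh] at this
  rw [this, (h m hm).1]

lemma Ea_bihom {a b : ℕ} {P : MvPolynomial (Fin 4) ℂ} (h : IsBihomogeneous a b P) :
    Ea P = (b : ℂ) • P := by
  conv_lhs => rw [P.as_sum]
  conv_rhs => rw [P.as_sum]
  rw [Ea, map_sum, map_sum, Finset.mul_sum, Finset.mul_sum, ← Finset.sum_add_distrib,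
    Finset.smul_sum]
  refine Finset.sum_congr rfl fun m hm => ?_
  have := Ea_monomial m (coeff m P)
  rw [Ea] at this
  rw [this, (h m hm).2]

lemma support_pderiv_subset (i : Fin 4) (P : MvPolynomial (Fin 4) ℂ) {n : Fin 4 →₀ ℕ}
    (hn : n ∈ (pderiv i P).support) :
    ∃ u ∈ P.support, u i ≠ 0 ∧ n = u - Finsupp.single i 1 := by
  rw [mem_support_iff] at hn
  conv at hn => rw [P.as_sum, map_sum]
  rw [coeff_sum] at hn
  obtain ⟨u, hu, hne⟩ := Finset.exists_ne_zero_of_sum_ne_zero hn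
  rw [pderiv_monomial, coeff_monomial] at hne
  classical
  split_ifs at hne with he
  · refine ⟨u, hu, ?_, he.symm⟩
    intro h0
    rw [h0] at hne
    simp at hne
  · simp at hne

lemma support_X_mul_pderiv {i j : Fin 4} {P : MvPolynomial (Fin 4) ℂ} {m : Fin 4 →₀ ℕ}
    (hm : m ∈ (X j * pderiv i P).support) :
    ∃ u ∈ P.support, u i ≠ 0 ∧ m = u - Finsupp.single i 1 + Finsupp.single j 1 := by
  rw [support_X_mul] at hm
  obtain ⟨n, hn, rfl⟩ := Finset.mem_map.mp hm
  obtain ⟨u, hu, hui, rfl⟩ := support_pderiv_subset i P hn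
  exact ⟨u, hu, hui, add_comm _ _⟩

lemma bihom_Z1 {a b : ℕ} {P : MvPolynomial (Fin 4) ℂ} (h : IsBihomogeneous a b P) :
    IsBihomogeneous (a - 1) (b + 1) (Z1 P) := by
  intro m hm
  rw [mem_support_iff, Z1, coeff_sub] at hm
  have hcase : coeff m (X 3 * pderiv 0 P) ≠ 0 ∨ coeff m (X 2 * pderiv 1 P) ≠ 0 := by
    by_contra h'
    push_neg at h'
    rw [h'.1, h'.2, sub_zero] at hm
    exact hm rfl
  rcases hcase with hc | hc
  · obtain ⟨u, hu, hui, rfl⟩ := support_X_mul_pderiv (mem_support_iff.mpr hc)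
    obtain ⟨e1, e2⟩ := h u hu
    refine ⟨?_, ?_⟩ <;>
      · simp [Finsupp.add_apply, Finsupp.tsub_apply, Finsupp.single_apply]
        omega
  · obtain ⟨u, hu, hui, rfl⟩ := support_X_mul_pderiv (mem_support_iff.mpr hc)
    obtain ⟨e1, e2⟩ := h u hu
    refine ⟨?_, ?_⟩ <;>
      · simp [Finsupp.add_apply, Finsupp.tsub_apply, Finsupp.single_apply]
        omega

lemma bihom_S1 {a b : ℕ} {P : MvPolynomial (Fin 4) ℂ} (h : IsBihomogeneous a (b + 1) P) :
    IsBihomogeneous (a + 1) b (S1 P) := by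
  intro m hm
  rw [mem_support_iff, S1, coeff_sub] at hm
  have hcase : coeff m (X 1 * pderiv 2 P) ≠ 0 ∨ coeff m (X 0 * pderiv 3 P) ≠ 0 := by
    by_contra h'
    push_neg at h'
    rw [h'.1, h'.2, sub_zero] at hm
    exact hm rfl
  rcases hcase with hc | hc
  · obtain ⟨u, hu, hui, rfl⟩ := support_X_mul_pderiv (mem_support_iff.mpr hc)
    obtain ⟨e1, e2⟩ := h u hu
    refine ⟨?_, ?_⟩ <;>
      · simp [Finsupp.add_apply, Finsupp.tsub_apply, Finsupp.single_apply]
        omega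
  · obtain ⟨u, hu, hui, rfl⟩ := support_X_mul_pderiv (mem_support_iff.mpr hc)
    obtain ⟨e1, e2⟩ := h u hu
    refine ⟨?_, ?_⟩ <;>
      · simp [Finsupp.add_apply, Finsupp.tsub_apply, Finsupp.single_apply]
        omega


lemma realzero : ∀ {n : ℕ} (Q : MvPolynomial (Fin n) ℂ),
    (∀ x : Fin n → ℝ, eval (fun i => (x i : ℂ)) Q = 0) → Q = 0 := by
  intro n
  induction n with
  | zero =>
      intro Q h
      have h0 := h (fun _ => 0)
      rw [eq_C_of_isEmpty Q] at h0 ⊢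
      rw [eval_C] at h0
      rw [h0, map_zero]
  | succ n ih =>
      intro Q h
      have key : finSuccEquiv ℂ n Q = 0 := by
        apply Polynomial.ext
        intro k
        rw [Polynomial.coeff_zero]
        apply ih
        intro x
        have hmap : Polynomial.map (eval fun i => (x i : ℂ)) (finSuccEquiv ℂ n Q) = 0 := by
          apply Polynomial.eq_zero_of_infinite_isRoot
          apply Set.Infinite.mono ?_ (Set.infinite_range_of_injective Complex.ofReal_injective)
          rintro c ⟨t, rfl⟩
          have hcons : (fun i => ((Fin.cons t x : Fin (n+1) → ℝ) i : ℂ))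
              = Fin.cons (t : ℂ) (fun i => (x i : ℂ)) := by
            funext i
            refine Fin.cases ?_ ?_ i <;> simp
          have := h (Fin.cons t x)
          rw [hcons, eval_eq_eval_mv_eval'] at this
          exact this
        have := congrArg (fun p => Polynomial.coeff p k) hmap
        simpa [Polynomial.coeff_map] using this
      have := congrArg (finSuccEquiv ℂ n).symm key
      simpa using this

noncomputable def vvec : Fin 4 → MvPolynomial (Fin 4) ℂ :=
  ![X 0 + C Complex.I * X 1, X 2 + C Complex.I * X 3,
    X 0 - C Complex.I * X 1, X 2 - C Complex.I * X 3]

noncomputable def uvec : Fin 4 → MvPolynomial (Fin 4) ℂ :=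
  ![C (2⁻¹ : ℂ) * (X 0 + X 2), C ((2 * Complex.I)⁻¹ : ℂ) * (X 0 - X 2),
    C (2⁻¹ : ℂ) * (X 1 + X 3), C ((2 * Complex.I)⁻¹ : ℂ) * (X 1 - X 3)]

noncomputable def phi4 (P : MvPolynomial (Fin 4) ℂ) : MvPolynomial (Fin 4) ℂ := bind₁ vvec P

lemma phi4_inj : Function.Injective phi4 := by
  have h1 : (C Complex.I : MvPolynomial (Fin 4) ℂ) * C ((2 * Complex.I)⁻¹) = C (2⁻¹ : ℂ) := by
    rw [← C_mul]
    congr 1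
    field_simp
  have h2 : (C (2⁻¹ : ℂ) : MvPolynomial (Fin 4) ℂ) * 2 = 1 := by
    rw [← map_ofNat (C : ℂ →+* MvPolynomial (Fin 4) ℂ) 2, ← C_mul]
    norm_num
  have hleft : ∀ P, bind₁ uvec (phi4 P) = P := by
    intro P
    rw [phi4, bind₁_bind₁]
    have hfun : (fun i => bind₁ uvec (vvec i)) = X (R := ℂ) := by
      funext i
      fin_cases i
      · show bind₁ uvec (X 0 + C Complex.I * X 1) = X 0
        simp only [map_add, map_mul, bind₁_X_right, bind₁_C_right, uvec,
          Matrix.cons_val_zero, Matrix.cons_val_one, Matrix.head_cons]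
        linear_combination (X (0:Fin 4) - X 2) * h1 + X (0:Fin 4) * h2
      · show bind₁ uvec (X 2 + C Complex.I * X 3) = X 1
        simp only [map_add, map_mul, bind₁_X_right, bind₁_C_right, uvec,
          Matrix.cons_val_zero, Matrix.cons_val_one, Matrix.head_cons,
          Matrix.cons_val_two, Matrix.tail_cons, Matrix.cons_val_three]
        linear_combination (X (1:Fin 4) - X 3) * h1 + X (1:Fin 4) * h2
      · show bind₁ uvec (X 0 - C Complex.I * X 1) = X 2
        simp only [map_sub, map_mul, bind₁_X_right, bind₁_C_right, uvec,
          Matrix.cons_val_zero, Matrix.cons_val_one, Matrix.head_cons]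
        linear_combination (X (2:Fin 4) - X 0) * h1 + X (2:Fin 4) * h2
      · show bind₁ uvec (X 2 - C Complex.I * X 3) = X 3
        simp only [map_sub, map_mul, bind₁_X_right, bind₁_C_right, uvec,
          Matrix.cons_val_zero, Matrix.cons_val_one, Matrix.head_cons,
          Matrix.cons_val_two, Matrix.tail_cons, Matrix.cons_val_three]
        linear_combination (X (3:Fin 4) - X 1) * h1 + X (3:Fin 4) * h2
    rw [hfun, bind₁_X_left]
    rfl
  intro P Q hPQ
  have := congrArg (bind₁ uvec) hPQ
  rwa [hleft, hleft] at this

lemma evalS_eq_zero_all {P : MvPolynomial (Fin 4) ℂ} (h : ∀ v : ℂ × ℂ, evalS P v = 0) :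
    P = 0 := by
  have hphi : phi4 P = 0 := by
    apply realzero
    intro x
    have step : eval (fun i => (x i : ℂ)) (phi4 P)
        = eval (fun i => eval (fun j => (x j : ℂ)) (vvec i)) P :=
      eval₂Hom_bind₁ (RingHom.id ℂ) _ vvec P
    rw [step]
    have hv : (fun i => eval (fun j => (x j : ℂ)) (vvec i))
        = ![(x 0 : ℂ) + Complex.I * x 1, (x 2 : ℂ) + Complex.I * x 3,
            starRingEnd ℂ ((x 0 : ℂ) + Complex.I * x 1),
            starRingEnd ℂ ((x 2 : ℂ) + Complex.I * x 3)] := by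
      funext i
      fin_cases i
      · show eval (fun j => (x j : ℂ)) (X 0 + C Complex.I * X 1) = (x 0 : ℂ) + Complex.I * x 1
        simp
      · show eval (fun j => (x j : ℂ)) (X 2 + C Complex.I * X 3) = (x 2 : ℂ) + Complex.I * x 3
        simp
      · show eval (fun j => (x j : ℂ)) (X 0 - C Complex.I * X 1)
            = starRingEnd ℂ ((x 0 : ℂ) + Complex.I * x 1)
        simp [map_add, map_mul, Complex.conj_ofReal, Complex.conj_I]
        ring
      · show eval (fun j => (x j : ℂ)) (X 2 - C Complex.I * X 3)
            = starRingEnd ℂ ((x 2 : ℂ) + Complex.I * x 3)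
        simp [map_add, map_mul, Complex.conj_ofReal, Complex.conj_I]
        ring
    rw [hv]
    exact h ((x 0 : ℂ) + Complex.I * x 1, (x 2 : ℂ) + Complex.I * x 3)
  have h0 : phi4 (0 : MvPolynomial (Fin 4) ℂ) = 0 := by
    rw [phi4, map_zero]
  exact phi4_inj (hphi.trans h0.symm)

lemma evalS_smul {a b : ℕ} {P : MvPolynomial (Fin 4) ℂ} (h : IsBihomogeneous a b P)
    (r : ℝ) (v : ℂ × ℂ) :
    evalS P ((r : ℂ) * v.1, (r : ℂ) * v.2) = (r : ℂ) ^ (a + b) * evalS P v := by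
  rw [evalS, evalS]
  have hvec : (![(r:ℂ) * v.1, (r:ℂ) * v.2, starRingEnd ℂ ((r:ℂ) * v.1),
      starRingEnd ℂ ((r:ℂ) * v.2)] : Fin 4 → ℂ)
      = fun i => (r : ℂ) * (![v.1, v.2, starRingEnd ℂ v.1, starRingEnd ℂ v.2] i) := by
    funext i
    fin_cases i <;> simp [Complex.conj_ofReal]
  rw [hvec]
  set g : Fin 4 → ℂ := ![v.1, v.2, starRingEnd ℂ v.1, starRingEnd ℂ v.2] with hg
  conv_lhs => rw [P.as_sum]
  conv_rhs => rw [P.as_sum]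
  rw [map_sum, map_sum, Finset.mul_sum]
  refine Finset.sum_congr rfl fun m hm => ?_
  rw [eval_monomial, eval_monomial, Finsupp.prod, Finsupp.prod]
  simp_rw [mul_pow]
  rw [Finset.prod_mul_distrib, Finset.prod_pow_eq_pow_sum]
  have hsum : ∑ n ∈ m.support, m n = a + b := by
    have hext : ∑ n ∈ m.support, m n = ∑ n : Fin 4, m n := by
      apply Finset.sum_subset (Finset.subset_univ _)
      intro i _ hi
      rw [Finsupp.notMem_support_iff] at hi
      exact hi
    rw [hext, Fin.sum_univ_four]
    obtain ⟨e1, e2⟩ := h m hm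
    omega
  rw [hsum]
  ring

lemma bihom_vanish {a b : ℕ} {P : MvPolynomial (Fin 4) ℂ} (hab : 1 ≤ a + b)
    (h : IsBihomogeneous a b P) (h0 : ∀ v, OnSphere v → evalS P v = 0) : P = 0 := by
  apply evalS_eq_zero_all
  intro v
  rcases eq_or_ne (Complex.normSq v.1 + Complex.normSq v.2) 0 with hN | hN
  · have hnn1 := Complex.normSq_nonneg v.1
    have hnn2 := Complex.normSq_nonneg v.2
    have hv1 : v.1 = 0 := Complex.normSq_eq_zero.mp (by linarith)
    have hv2 : v.2 = 0 := Complex.normSq_eq_zero.mp (by linarith)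
    have hfun0 : (![v.1, v.2, starRingEnd ℂ v.1, starRingEnd ℂ v.2] : Fin 4 → ℂ)
        = fun _ => (0:ℂ) := by
      funext i
      fin_cases i
      · show v.1 = 0; exact hv1
      · show v.2 = 0; exact hv2
      · show starRingEnd ℂ v.1 = 0; rw [hv1, map_zero]
      · show starRingEnd ℂ v.2 = 0; rw [hv2, map_zero]
    have hzero : evalS P v = eval (fun _ => (0:ℂ)) P := by
      rw [evalS, hfun0]
    rw [hzero, eval_zero', constantCoeff_eq]
    by_contra hc
    obtain ⟨e1, e2⟩ := h 0 (mem_support_iff.mpr hc)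
    simp only [Finsupp.coe_zero, Pi.zero_apply] at e1 e2
    omega
  · have hNpos : 0 < Complex.normSq v.1 + Complex.normSq v.2 := by
      rcases lt_or_eq_of_le (add_nonneg (Complex.normSq_nonneg v.1) (Complex.normSq_nonneg v.2))
        with h' | h'
      · exact h'
      · exact absurd h'.symm hN
    set r : ℝ := Real.sqrt (Complex.normSq v.1 + Complex.normSq v.2) with hr
    have hrpos : 0 < r := Real.sqrt_pos.mpr hNpos
    have hrne : (r : ℂ) ≠ 0 := by
      exact_mod_cast Complex.ofReal_ne_zero.mpr (ne_of_gt hrpos)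
    set u : ℂ × ℂ := (((r:ℝ)⁻¹ : ℝ) * v.1, ((r:ℝ)⁻¹ : ℝ) * v.2) with hu
    have husph : OnSphere u := by
      rw [OnSphere, hu]
      simp only [Complex.normSq_mul]
      have : Complex.normSq ((r⁻¹ : ℝ) : ℂ) = r⁻¹ * r⁻¹ := Complex.normSq_ofReal _
      rw [this]
      rw [← mul_add]
      field_simp
      exact (Real.sq_sqrt (le_of_lt hNpos)).symm
    have hveq : v = ((r:ℂ) * u.1, (r:ℂ) * u.2) := by
      rw [hu]
      simp only
      push_cast
      rw [← mul_assoc, ← mul_assoc, mul_inv_cancel₀ hrne, one_mul, one_mul]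
    rw [hveq, evalS_smul h r u, h0 u husph, mul_zero]


/-- for `p ≥ 1`, `q ≥ 0`, the (linear) map `Z₁ : H_{p,q} → H_{p−1,q+1}`
is an isomorphism of finite-dimensional complex vector spaces: it is injective
(as a map of restrictions to `S³`) and surjective onto `H_{p−1,q+1}`. -/
theorem stmt2 (p q : ℕ) (hp : 1 ≤ p) :
    (∀ P P' : MvPolynomial (Fin 4) ℂ, IsHpq p q P → IsHpq p q P' →
      (∀ v, OnSphere v → evalS (Z1 P) v = evalS (Z1 P') v) →
      ∀ v, OnSphere v → evalS P v = evalS P' v) ∧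
    (∀ Q : MvPolynomial (Fin 4) ℂ, IsHpq (p - 1) (q + 1) Q →
      ∃ P : MvPolynomial (Fin 4) ℂ, IsHpq p q P ∧
        ∀ v, OnSphere v → evalS (Z1 P) v = evalS Q v) := by
  have hpne : ((p : ℂ) * ((q : ℂ) + 1)) ≠ 0 := by
    apply mul_ne_zero
    · exact_mod_cast Nat.cast_ne_zero.mpr (by omega)
    · exact Nat.cast_add_one_ne_zero q
  constructor
  · intro P P' hP hP' hZ v hv
    have hDb : IsBihomogeneous p q (P - P') := by
      intro m hm
      rw [mem_support_iff, coeff_sub] at hm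
      have hor : coeff m P ≠ 0 ∨ coeff m P' ≠ 0 := by
        by_contra hcon
        push_neg at hcon
        rw [hcon.1, hcon.2, sub_zero] at hm
        exact hm rfl
      rcases hor with hcc | hcc
      · exact hP.1 m (mem_support_iff.mpr hcc)
      · exact hP'.1 m (mem_support_iff.mpr hcc)
    have hDl : lap (P - P') = 0 := by
      have hsplit : lap (P - P') = lap P - lap P' := by
        simp only [lap, map_sub]
        ring
      rw [hsplit, hP.2, hP'.2, sub_zero]
    have hZsub : Z1 (P - P') = Z1 P - Z1 P' := by
      simp only [Z1, map_sub]
      ring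
    have hZ10 : Z1 (P - P') = 0 := by
      apply bihom_vanish (a := p - 1) (b := q + 1) (by omega) (bihom_Z1 hDb)
      intro w hw
      have hev : evalS (Z1 (P - P')) w = evalS (Z1 P) w - evalS (Z1 P') w := by
        rw [hZsub, evalS, evalS, evalS, map_sub]
      rw [hev, hZ w hw, sub_self]
    have key := opB (P - P')
    have hEsm : Eh ((q:ℂ) • (P - P')) = (q:ℂ) • ((p:ℂ) • (P - P')) := by
      have hlin : Eh ((q:ℂ) • (P - P')) = (q:ℂ) • Eh (P - P') := by
        simp only [Eh, Derivation.map_smul, mul_smul_comm, smul_add]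
      rw [hlin, Eh_bihom hDb]
    rw [hZ10, hDl, Ea_bihom hDb, hEsm, Eh_bihom hDb] at key
    have hS10 : S1 (0 : MvPolynomial (Fin 4) ℂ) = 0 := by simp [S1]
    rw [hS10, mul_zero, zero_sub] at key
    have hD0 : P - P' = 0 := by
      have hcomb : ((p:ℂ) * ((q:ℂ) + 1)) • (P - P') = 0 := by
        have h2 : (q:ℂ) • ((p:ℂ) • (P - P')) + (p:ℂ) • (P - P') = 0 := by
          rw [← neg_eq_zero, neg_add, ← sub_eq_add_neg]
          exact key.symm
        rw [smul_smul] at h2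
        calc ((p:ℂ) * ((q:ℂ) + 1)) • (P - P')
            = ((q:ℂ) * (p:ℂ)) • (P - P') + (p:ℂ) • (P - P') := by
              rw [← add_smul]
              congr 1
              ring
          _ = 0 := h2
      rcases smul_eq_zero.mp hcomb with hcl | hcl
      · exact absurd hcl hpne
      · exact hcl
    have hPP : P = P' := sub_eq_zero.mp hD0
    rw [hPP]
  · intro Q hQ
    set c : ℂ := -(((p:ℂ) * ((q:ℂ) + 1))⁻¹) with hcdef
    have hZS : Z1 (S1 Q) = (-(((q:ℂ) + 1) * (p:ℂ))) • Q := by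
      have key := opA Q
      rw [hQ.2, mul_zero, zero_sub, Ea_bihom hQ.1] at key
      have hEsm : Eh ((((q+1 : ℕ)):ℂ) • Q) = (((q+1 : ℕ)):ℂ) • ((((p-1 : ℕ)):ℂ) • Q) := by
        have hlin : Eh ((((q+1 : ℕ)):ℂ) • Q) = (((q+1 : ℕ)):ℂ) • Eh Q := by
          simp only [Eh, Derivation.map_smul, mul_smul_comm, smul_add]
        rw [hlin, Eh_bihom hQ.1]
      rw [hEsm] at key
      rw [key, smul_smul, ← neg_smul, ← sub_smul]
      congr 1
      push_cast [Nat.cast_sub hp]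
      ring
    have hZQ : Z1 (c • S1 Q) = Q := by
      have hZsmul : Z1 (c • S1 Q) = c • Z1 (S1 Q) := by
        simp only [Z1, Derivation.map_smul, mul_smul_comm, smul_sub]
      rw [hZsmul, hZS, smul_smul]
      have hone : c * -(((q:ℂ) + 1) * (p:ℂ)) = 1 := by
        rw [hcdef]
        have hp0 : (p:ℂ) ≠ 0 := by exact_mod_cast (show p ≠ 0 by omega)
        field_simp
      rw [hone, one_smul]
    refine ⟨c • S1 Q, ⟨?_, ?_⟩, ?_⟩
    · have h1 : IsBihomogeneous (p - 1 + 1) q (S1 Q) := bihom_S1 hQ.1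
      rw [Nat.sub_add_cancel hp] at h1
      intro m hm
      apply h1 m
      rw [mem_support_iff] at hm ⊢
      intro hz
      apply hm
      rw [coeff_smul, hz, smul_zero]
    · have hls : lap (c • S1 Q) = c • lap (S1 Q) := by
        simp only [lap, ← C_mul', pderiv_mul, pderiv_C, zero_mul, zero_add]
        ring
      rw [hls, opC, hQ.2]
      have : S1 (0 : MvPolynomial (Fin 4) ℂ) = 0 := by simp [S1]
      rw [this, smul_zero]
    · intro v hv
      rw [hZQ]
end

section
/- Let C > 0 and let C_s > 0 satisfy C_s² > C(5C_s + 1). Suppose (a_k)_{k≥0} is a sequence of nonnegative reals with a_0 ≤ C·ε, a_1 ≤ 5C·ε·a_0, and a_k ≤ C(5ε·a_{k−1} + ε²·a_{k−2}) for k ≥ 2, where ε > 0. Then a_k ≤ (C_s ε)^{k+1} for all k ≥ 0; consequently the power series Σ a_k t^k converges for |t| < (C_s ε)^{−1}. -/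
/-- the recursion underlying the convergence of the formal solution of the
tangency equation. If `C_s² > C(5C_s + 1)` and the nonnegative sequence `(a_k)` satisfies
`a₀ ≤ Cε`, `a₁ ≤ 5Cε a₀` and `a_k ≤ C(5ε a_{k−1} + ε² a_{k−2})` for `k ≥ 2`, then
`a_k ≤ (C_s ε)^{k+1}` for all `k`, and `∑ a_k t^k` converges for `|t| < (C_s ε)⁻¹`. -/
theorem stmt9 (C Cs ε : ℝ) (hC : 0 < C) (hCs : 0 < Cs) (hε : 0 < ε)
    (hrel : C * (5 * Cs + 1) < Cs ^ 2)
    (a : ℕ → ℝ) (ha : ∀ k, 0 ≤ a k)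
    (h0 : a 0 ≤ C * ε) (h1 : a 1 ≤ 5 * C * ε * a 0)
    (hk : ∀ k, 2 ≤ k → a k ≤ C * (5 * ε * a (k - 1) + ε ^ 2 * a (k - 2))) :
    (∀ k, a k ≤ (Cs * ε) ^ (k + 1)) ∧
    (∀ t : ℝ, |t| < (Cs * ε)⁻¹ → Summable fun k => a k * t ^ k) := by
  have hCle : C ≤ Cs := by nlinarith
  have key : ∀ k, a k ≤ (Cs * ε) ^ (k + 1) := by
    intro k
    induction k using Nat.strong_induction_on with
    | _ k ih =>
      match k with
      | 0 => simpa using h0.trans (by nlinarith)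
      | 1 =>
        have e : 5 * C * ε * a 0 ≤ 5 * C * ε * (C * ε) :=
          mul_le_mul_of_nonneg_left h0 (by positivity)
        have e2 : C * (5 * Cs + 1) * ε ^ 2 < Cs ^ 2 * ε ^ 2 :=
          mul_lt_mul_of_pos_right hrel (by positivity)
        have := h1.trans (by nlinarith [mul_pos hC hε] : 5 * C * ε * a 0 ≤ (Cs * ε) ^ 2)
        simpa using this
      | (n + 2) =>
        have h := hk (n + 2) (by omega)
        simp only [Nat.add_sub_cancel] at h
        have h' : n + 2 - 1 = n + 1 := by omega
        rw [h'] at h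
        have i1 := ih (n + 1) (by omega)
        have i2 := ih n (by omega)
        have hx : (0:ℝ) < (Cs * ε) ^ (n + 1) := pow_pos (by positivity) _
        calc a (n + 2) ≤ C * (5 * ε * a (n + 1) + ε ^ 2 * a n) := h
          _ ≤ C * (5 * ε * ((Cs * ε) ^ (n + 2)) + ε ^ 2 * ((Cs * ε) ^ (n + 1))) := by
              gcongr
          _ ≤ (Cs * ε) ^ (n + 3) := by
              have e1 : (Cs * ε) ^ (n + 2) = (Cs * ε) ^ (n + 1) * (Cs * ε) := by ring
              have e2 : (Cs * ε) ^ (n + 3) = (Cs * ε) ^ (n + 1) * (Cs * ε) ^ 2 := by ring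
              rw [e1, e2]
              nlinarith [mul_lt_mul_of_pos_right hrel (mul_pos hx (pow_pos hε 2))]
  refine ⟨key, fun t ht => ?_⟩
  have hq : Cs * ε * |t| < 1 := by
    have h2 := mul_lt_mul_of_pos_left ht (show (0:ℝ) < Cs * ε by positivity)
    rwa [mul_inv_cancel₀ (by positivity)] at h2
  apply Summable.of_norm
  have hg : Summable fun k => Cs * ε * (Cs * ε * |t|) ^ k :=
    (summable_geometric_of_lt_one (by positivity) hq).mul_left _
  refine hg.of_nonneg_of_le (fun k => norm_nonneg _) fun k => ?_
  rw [norm_mul, norm_pow, Real.norm_eq_abs, Real.norm_eq_abs, abs_of_nonneg (ha k)]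
  calc a k * |t| ^ k ≤ (Cs * ε) ^ (k + 1) * |t| ^ k :=
        mul_le_mul_of_nonneg_right (key k) (by positivity)
    _ = Cs * ε * (Cs * ε * |t|) ^ k := by rw [mul_pow, pow_succ]; ring
end
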